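/- Let (A,B) be a maximal c/d-cross-intersecting pair of 2^{[n]} with 0 < c/d < 1 irreducible. Then B is closed under intersection: for any B₁, B₂ ∈ B, the set B₁ ∩ B₂ also satisfies |A ∩ (B₁ ∩ B₂)| = (c/d)|B₁ ∩ B₂| for every A ∈ A. -/

import Mathlib

open Module Finset

variable {n : ℕ}

def chi (b : Finset (Fin n)) : Fin n → ℚ := fun i => if i ∈ b then 1 else 0

lemma chi_injective : Function.Injective (chi (n := n)) := by
  intro b b' h
  ext i
  have := congrFun h i
  unfold chi at this
  by_cases hb : i ∈ b <;> by_cases hb' : i ∈ b' <;> simp_all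

lemma chi_01 (b : Finset (Fin n)) (i : Fin n) : chi b i = 0 ∨ chi b i = 1 := by
  unfold chi; split <;> simp

lemma sum_chi (b : Finset (Fin n)) : ∑ i, chi b i = b.card := by
  unfold chi; simp

lemma sum_chi_mul (a b : Finset (Fin n)) :
    ∑ i, chi a i * chi b i = (a ∩ b).card := by
  have : ∀ i, chi a i * chi b i = chi (a ∩ b) i := by
    intro i; unfold chi
    by_cases ha : i ∈ a <;> by_cases hb : i ∈ b <;> simp [ha, hb]
  rw [Finset.sum_congr rfl (fun i _ => this i), sum_chi]

/-- Counting lemma: a finset of 0/1 vectors whose pairwise differences lie in a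
subspace of rank ≤ k has at most 2^k elements. -/
lemma card_le_pow (k : ℕ) :
    ∀ (V : Submodule ℚ (Fin n → ℚ)) (S : Finset (Fin n → ℚ)),
      (∀ v ∈ S, ∀ i, v i = 0 ∨ v i = 1) →
      (∀ v ∈ S, ∀ v' ∈ S, v - v' ∈ V) →
      finrank ℚ V ≤ k → S.card ≤ 2 ^ k := by
  induction k with
  | zero =>
    intro V S h01 hd hk
    have hV : V = ⊥ := by
      rw [← Submodule.finrank_eq_zero (R := ℚ)]
      omega
    subst hV
    refine Finset.card_le_one.2 (fun v hv v' hv' => ?_) |>.trans (by norm_num)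
    have := hd v hv v' hv'
    rw [Submodule.mem_bot, sub_eq_zero] at this
    exact this
  | succ k ih =>
    intro V S h01 hd hk
    by_cases hS : S.card ≤ 1
    · exact hS.trans (Nat.one_le_two_pow)
    push_neg at hS
    obtain ⟨v₁, hv₁, v₂, hv₂, hne⟩ := Finset.one_lt_card.1 hS
    have : ∃ i, v₁ i ≠ v₂ i := by
      by_contra h; push_neg at h; exact hne (funext h)
    obtain ⟨i, hi⟩ := this
    set V' := V ⊓ LinearMap.ker (LinearMap.proj (R := ℚ) (φ := fun _ : Fin n => ℚ) i) with hV'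
    have hV'lt : V' < V := by
      refine lt_of_le_of_ne inf_le_left (fun h => ?_)
      have hmem : v₁ - v₂ ∈ V' := h ▸ hd v₁ hv₁ v₂ hv₂
      have : (v₁ - v₂) i = 0 := hmem.2
      simp only [Pi.sub_apply, sub_eq_zero] at this
      exact hi this
    have hV'k : finrank ℚ V' ≤ k := by
      have := Submodule.finrank_lt_finrank_of_lt hV'lt
      omega
    set S0 := S.filter (fun v => v i = 0) with hS0
    set S1 := S.filter (fun v => v i ≠ 0) with hS1
    have hcard : S0.card + S1.card = S.card := Finset.card_filter_add_card_filter_not _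
    have hd0 : ∀ v ∈ S0, ∀ v' ∈ S0, v - v' ∈ V' := by
      intro v hv v' hv'
      rw [Finset.mem_filter] at hv hv'
      refine ⟨hd v hv.1 v' hv'.1, ?_⟩
      simp [LinearMap.mem_ker, hv.2, hv'.2]
    have hd1 : ∀ v ∈ S1, ∀ v' ∈ S1, v - v' ∈ V' := by
      intro v hv v' hv'
      rw [Finset.mem_filter] at hv hv'
      have h1 : v i = 1 := (h01 v hv.1 i).resolve_left hv.2
      have h2 : v' i = 1 := (h01 v' hv'.1 i).resolve_left hv'.2
      refine ⟨hd v hv.1 v' hv'.1, ?_⟩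
      simp [LinearMap.mem_ker, h1, h2]
    have h0 : S0.card ≤ 2 ^ k :=
      ih V' S0 (fun v hv => h01 v (Finset.mem_filter.1 hv).1) hd0 hV'k
    have h1 : S1.card ≤ 2 ^ k :=
      ih V' S1 (fun v hv => h01 v (Finset.mem_filter.1 hv).1) hd1 hV'k
    calc S.card = S0.card + S1.card := hcard.symm
    _ ≤ 2 ^ k + 2 ^ k := Nat.add_le_add h0 h1
    _ = 2 ^ (k + 1) := by ring

/-- There is a set of at most `finrank W` coordinates on which members of `W`
are determined. -/
lemma exists_coords (W : Submodule ℚ (Fin n → ℚ)) :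
    ∃ s : Finset (Fin n), s.card ≤ finrank ℚ W ∧
      ∀ w ∈ W, (∀ i ∈ s, w i = 0) → w = 0 := by
  set Inj : Finset (Fin n) → Prop := fun s => ∀ w ∈ W, (∀ i ∈ s, w i = 0) → w = 0 with hInj
  have hex : ∃ m, ∃ s : Finset (Fin n), s.card ≤ m ∧ Inj s := by
    refine ⟨n, Finset.univ, by simp, fun w _ h => funext fun i => h i (Finset.mem_univ i)⟩
  classical
  obtain ⟨s, hsm, hs⟩ := Nat.find_spec hex
  have hmin : ∀ i ∈ s, ∃ w, w ∈ W ∧ w ≠ 0 ∧ ∀ i' ∈ s.erase i, w i' = 0 := by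
    intro i hi
    by_contra hcon
    push_neg at hcon
    have hInje : Inj (s.erase i) := by
      intro w hw hz
      by_contra hne
      obtain ⟨i', hi', hne'⟩ := hcon w hw hne
      exact hne' (hz i' hi')
    have hcard : (s.erase i).card ≤ Nat.find hex - 1 := by
      have h1 : 1 ≤ s.card := Finset.card_pos.2 ⟨i, hi⟩
      have := Finset.card_erase_of_mem hi
      omega
    have hlt : Nat.find hex - 1 < Nat.find hex := by
      have h1 : 1 ≤ s.card := Finset.card_pos.2 ⟨i, hi⟩
      omega
    exact Nat.find_min hex hlt ⟨s.erase i, hcard, hInje⟩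
  -- choose witnesses
  choose w hwW hwne hwz using hmin
  -- they are linearly independent
  have hli : LinearIndependent ℚ (fun i : {x // x ∈ s} => w i.1 i.2) := by
    rw [Fintype.linearIndependent_iff]
    intro g hg i₀
    have := congrFun hg i₀.1
    rw [Finset.sum_apply] at this
    simp only [Pi.smul_apply, Pi.zero_apply, smul_eq_mul] at this
    have hsum : ∀ i : {x // x ∈ s}, i ≠ i₀ → g i • w i.1 i.2 i₀.1 = 0 := by
      intro i hii
      have : w i.1 i.2 i₀.1 = 0 := by
        refine hwz i.1 i.2 i₀.1 (Finset.mem_erase.2 ⟨?_, i₀.2⟩)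
        intro h
        exact hii (Subtype.ext h.symm)  -- i₀ = i means …
      simp [this]
    simp only [Pi.smul_apply, smul_eq_mul] at hsum
    rw [Finset.sum_eq_single i₀ (fun i _ hii => hsum i hii) (by simp)] at this
    have hne0 : w i₀.1 i₀.2 i₀.1 ≠ 0 := by
      intro h0
      refine hwne i₀.1 i₀.2 ?_
      refine hs _ (hwW i₀.1 i₀.2) (fun i' hi' => ?_)
      by_cases h' : i' = i₀.1
      · subst h'; exact h0
      · exact hwz i₀.1 i₀.2 i' (Finset.mem_erase.2 ⟨h', hi'⟩)
    have : g i₀ * w i₀.1 i₀.2 i₀.1 = 0 := by simpa using this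
    exact (mul_eq_zero.1 this).resolve_right hne0
  have hspan : Submodule.span ℚ (Set.range (fun i : {x // x ∈ s} => w i.1 i.2)) ≤ W := by
    rw [Submodule.span_le]
    rintro x ⟨i, rfl⟩
    exact hwW i.1 i.2
  have : s.card ≤ finrank ℚ W := by
    have h1 := finrank_span_eq_card hli
    have h2 := Submodule.finrank_mono (R := ℚ) hspan
    rw [h1] at h2
    simpa using h2
  exact ⟨s, this, hs⟩


theorem maximal_B_inter_closed (n c d : ℕ) (hn : 0 < n) (hc : 0 < c) (hcd : c < d)
    (hcop : Nat.Coprime c d)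
    (A B : Finset (Finset (Fin n)))
    (hcross : ∀ a ∈ A, ∀ b ∈ B, d * (a ∩ b).card = c * b.card)
    (hmax : A.card * B.card = 2 ^ n) :
    ∀ b₁ ∈ B, ∀ b₂ ∈ B, ∀ a ∈ A,
      d * (a ∩ (b₁ ∩ b₂)).card = c * (b₁ ∩ b₂).card := by
  classical
  have hd0 : (d : ℚ) ≠ 0 := Nat.cast_ne_zero.2 (by omega)
  set wv : Finset (Fin n) → (Fin n → ℚ) := fun a i => (d : ℚ) * chi a i - c with hwv
  set W : Submodule ℚ (Fin n → ℚ) := Submodule.span ℚ (chi '' ↑B) with hWdef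
  set U : Submodule ℚ (Fin n → ℚ) := Submodule.span ℚ (wv '' ↑A) with hUdef
  have hBW : ∀ b ∈ B, chi b ∈ W := fun b hb => Submodule.subset_span ⟨b, hb, rfl⟩
  have hAU : ∀ a ∈ A, wv a ∈ U := fun a ha => Submodule.subset_span ⟨a, ha, rfl⟩
  -- orthogonality on generators
  have hgen : ∀ a ∈ A, ∀ b ∈ B, ∑ i, wv a i * chi b i = 0 := by
    intro a ha b hb
    have h1 : ∑ i, wv a i * chi b i
        = (d : ℚ) * ((a ∩ b).card) - c * (b.card) := by
      rw [hwv]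
      simp only [sub_mul]
      rw [Finset.sum_sub_distrib]
      rw [← sum_chi_mul a b, ← sum_chi b, Finset.mul_sum, Finset.mul_sum]
      congr 1
      · exact Finset.sum_congr rfl fun i _ => by ring
    rw [h1]
    have := hcross a ha b hb
    have h2 : ((d : ℚ)) * ((a ∩ b).card) = (c : ℚ) * (b.card) := by
      exact_mod_cast congrArg (Nat.cast : ℕ → ℚ) this
    rw [h2]; ring
  -- orthogonality of U and W
  have horthW : ∀ a ∈ A, ∀ y ∈ W, ∑ i, wv a i * y i = 0 := by
    intro a ha y hy
    induction hy using Submodule.span_induction with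
    | mem x hx =>
      obtain ⟨b, hb, rfl⟩ := hx
      exact hgen a ha b hb
    | zero => simp
    | add x y hx hy px py =>
      have : ∑ i, wv a i * (x + y) i = (∑ i, wv a i * x i) + ∑ i, wv a i * y i := by
        rw [← Finset.sum_add_distrib]
        exact Finset.sum_congr rfl fun i _ => by simp [mul_add]
      rw [this, px, py, add_zero]
    | smul r x hx px =>
      have : ∑ i, wv a i * (r • x) i = r * ∑ i, wv a i * x i := by
        rw [Finset.mul_sum]
        exact Finset.sum_congr rfl fun i _ => by simp [smul_eq_mul]; ring
      rw [this, px, mul_zero]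
  have horthU : ∀ x ∈ U, ∀ y ∈ W, ∑ i, x i * y i = 0 := by
    intro x hx
    induction hx using Submodule.span_induction with
    | mem x hx =>
      obtain ⟨a, ha, rfl⟩ := hx
      exact horthW a ha
    | zero => intro y hy; simp
    | add x y hx hy px py =>
      intro z hz
      have : ∑ i, (x + y) i * z i = (∑ i, x i * z i) + ∑ i, y i * z i := by
        rw [← Finset.sum_add_distrib]
        exact Finset.sum_congr rfl fun i _ => by simp [add_mul]
      rw [this, px z hz, py z hz, add_zero]
    | smul r x hx px =>
      intro z hz
      have : ∑ i, (r • x) i * z i = r * ∑ i, x i * z i := by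
        rw [Finset.mul_sum]
        exact Finset.sum_congr rfl fun i _ => by simp [smul_eq_mul]; ring
      rw [this, px z hz, mul_zero]
  have hUW : U ⊓ W = ⊥ := by
    rw [eq_bot_iff]
    rintro x ⟨hxU, hxW⟩
    have h0 := horthU x hxU x hxW
    rw [Submodule.mem_bot]
    funext i
    have hnn : ∀ j ∈ Finset.univ (α := Fin n), (0:ℚ) ≤ x j * x j :=
      fun j _ => mul_self_nonneg _
    have := (Finset.sum_eq_zero_iff_of_nonneg hnn).1 h0 i (Finset.mem_univ i)
    exact mul_self_eq_zero.1 this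
  -- dimension count
  have hdim : finrank ℚ U + finrank ℚ W ≤ n := by
    have h1 := Submodule.finrank_sup_add_finrank_inf_eq U W
    rw [hUW, finrank_bot] at h1
    have h2 : finrank ℚ ↥(U ⊔ W) ≤ n :=
      le_trans (Submodule.finrank_le _) (le_of_eq (finrank_fin_fun ℚ))
    omega
  set k := finrank ℚ W with hk
  have hkn : k ≤ n := le_trans (Submodule.finrank_le W) (le_of_eq (finrank_fin_fun ℚ))
  -- bound on A
  have hA : A.card ≤ 2 ^ (n - k) := by
    have hcard : (A.image chi).card = A.card :=
      Finset.card_image_of_injective _ chi_injective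
    rw [← hcard]
    refine card_le_pow (n - k) U (A.image chi) ?_ ?_ (by omega)
    · intro v hv i
      obtain ⟨a, _, rfl⟩ := Finset.mem_image.1 hv
      exact chi_01 a i
    · intro v hv v' hv'
      obtain ⟨a, ha, rfl⟩ := Finset.mem_image.1 hv
      obtain ⟨a', ha', rfl⟩ := Finset.mem_image.1 hv'
      have : chi a - chi a' = (d : ℚ)⁻¹ • (wv a - wv a') := by
        funext i
        simp only [Pi.sub_apply, Pi.smul_apply, smul_eq_mul, hwv]
        field_simp
        ring
      rw [this]
      exact Submodule.smul_mem _ _ (sub_mem (hAU a ha) (hAU a' ha'))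
  -- coordinates
  obtain ⟨s, hscard, hsInj⟩ := exists_coords W
  have hinj : Set.InjOn (fun b => b ∩ s) ↑B := by
    intro b hb b' hb' hh
    have h : b ∩ s = b' ∩ s := hh
    apply chi_injective
    have hz : chi b - chi b' = 0 := by
      refine hsInj _ (sub_mem (hBW b hb) (hBW b' hb')) ?_
      intro i hi
      have hib : i ∈ b ↔ i ∈ b' := by
        constructor
        · intro hmem
          have : i ∈ b ∩ s := Finset.mem_inter.2 ⟨hmem, hi⟩
          rw [h] at this
          exact (Finset.mem_inter.1 this).1
        · intro hmem
          have : i ∈ b' ∩ s := Finset.mem_inter.2 ⟨hmem, hi⟩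
          rw [← h] at this
          exact (Finset.mem_inter.1 this).1
      simp only [Pi.sub_apply, sub_eq_zero]
      unfold chi
      simp [hib]
    rw [← sub_eq_zero]
    exact hz
  have himg_sub : B.image (· ∩ s) ⊆ s.powerset := by
    intro t ht
    obtain ⟨b, _, rfl⟩ := Finset.mem_image.1 ht
    exact Finset.mem_powerset.2 Finset.inter_subset_right
  have hcardim : (B.image (· ∩ s)).card = B.card := Finset.card_image_of_injOn hinj
  have hBle : B.card ≤ 2 ^ s.card := by
    rw [← hcardim]
    exact le_trans (Finset.card_le_card himg_sub) (le_of_eq (Finset.card_powerset s))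
  have hBge : 2 ^ k ≤ B.card := by
    have h1 : 2 ^ n ≤ 2 ^ (n - k) * B.card := by
      rw [← hmax]
      exact Nat.mul_le_mul_right _ hA
    have h2 : 2 ^ (n - k) * 2 ^ k = 2 ^ n := by
      rw [← pow_add]; congr 1; omega
    rw [← h2] at h1
    exact Nat.le_of_mul_le_mul_left h1 (Nat.pow_pos (by norm_num))
  have hsk : s.card = k := by
    have : 2 ^ k ≤ 2 ^ s.card := le_trans hBge hBle
    have := (Nat.pow_le_pow_iff_right (by norm_num : 1 < 2)).1 this
    omega
  have hBcard : B.card = 2 ^ s.card := by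
    have h3 : 2 ^ s.card = 2 ^ k := by rw [hsk]
    omega
  have himg : B.image (· ∩ s) = s.powerset := by
    refine (Finset.eq_of_subset_of_card_le himg_sub ?_)
    rw [hcardim, Finset.card_powerset, ← hBcard]
  have hsurj : ∀ t ⊆ s, ∃ b ∈ B, b ∩ s = t := by
    intro t ht
    have : t ∈ B.image (· ∩ s) := by
      rw [himg]; exact Finset.mem_powerset.2 ht
    obtain ⟨b, hb, hbt⟩ := Finset.mem_image.1 this
    exact ⟨b, hb, hbt⟩
  -- β witnesses: singletons
  have hbeta : ∀ i : {x // x ∈ s}, ∃ b, b ∈ B ∧ b ∩ s = {i.1} :=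
    fun i => hsurj {i.1} (Finset.singleton_subset_iff.2 i.2)
  choose β hβB hβs using hbeta
  have chi_beta : ∀ (i i' : {x // x ∈ s}), chi (β i) i'.1 = if i' = i then 1 else 0 := by
    intro i i'
    have hmem : i'.1 ∈ β i ↔ i' = i := by
      constructor
      · intro h
        have : i'.1 ∈ β i ∩ s := Finset.mem_inter.2 ⟨h, i'.2⟩
        rw [hβs i] at this
        exact Subtype.ext (Finset.mem_singleton.1 this)
      · rintro rfl
        have : i'.1 ∈ β i' ∩ s := by rw [hβs]; exact Finset.mem_singleton_self _
        exact (Finset.mem_inter.1 this).1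
    unfold chi
    simp [hmem]
  have hli : LinearIndependent ℚ (fun i : {x // x ∈ s} => chi (β i)) := by
    rw [Fintype.linearIndependent_iff]
    intro g hg i₀
    have hcf := congrFun hg i₀.1
    rw [Finset.sum_apply] at hcf
    simp only [Pi.smul_apply, Pi.zero_apply, smul_eq_mul] at hcf
    rw [Finset.sum_eq_single i₀ (fun i _ hii => by rw [chi_beta i i₀]; simp [Ne.symm hii])
      (by simp)] at hcf
    rw [chi_beta i₀ i₀] at hcf
    simpa using hcf
  have hspaneq : Submodule.span ℚ (Set.range (fun i : {x // x ∈ s} => chi (β i))) = W := by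
    refine Submodule.eq_of_le_of_finrank_le ?_ ?_
    · rw [Submodule.span_le]
      rintro x ⟨i, rfl⟩
      exact hBW _ (hβB i)
    · rw [finrank_span_eq_card hli, Fintype.card_coe, hsk]
  have hrep : ∀ w ∈ W, ∀ j, w j = ∑ i : {x // x ∈ s}, w i.1 * chi (β i) j := by
    intro w hw
    rw [← hspaneq] at hw
    induction hw using Submodule.span_induction with
    | mem x hx =>
      obtain ⟨i₀, rfl⟩ := hx
      intro j
      show chi (β i₀) j = ∑ i : {x // x ∈ s}, chi (β i₀) i.1 * chi (β i) j
      rw [Finset.sum_eq_single i₀ (fun i _ hii => by rw [chi_beta i₀ i]; simp [hii]) (by simp)]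
      rw [chi_beta i₀ i₀]
      simp
    | zero => intro j; simp
    | add x y hx hy px py =>
      intro j
      have : ∀ i : {x // x ∈ s}, (x + y) i.1 * chi (β i) j
          = x i.1 * chi (β i) j + y i.1 * chi (β i) j := fun i => by
        simp [add_mul]
      rw [Finset.sum_congr rfl (fun i _ => this i), Finset.sum_add_distrib, ← px j, ← py j]
      simp
    | smul r x hx px =>
      intro j
      have : ∀ i : {x // x ∈ s}, (r • x) i.1 * chi (β i) j
          = r * (x i.1 * chi (β i) j) := fun i => by
        simp [smul_eq_mul]; ring
      rw [Finset.sum_congr rfl (fun i _ => this i), ← Finset.mul_sum, ← px j]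
      simp
  -- at most one β hits coordinate j
  have lambda_unique : ∀ (j : Fin n) (i₀ i₁ : {x // x ∈ s}), i₀ ≠ i₁ →
      chi (β i₀) j = 1 → chi (β i₁) j = 1 → False := by
    intro j i₀ i₁ hne h0 h1
    obtain ⟨b', hb'B, hb's⟩ := hsurj {i₀.1, i₁.1} (by
      intro x hx
      rcases Finset.mem_insert.1 hx with rfl | hx
      · exact i₀.2
      · rw [Finset.mem_singleton.1 hx]; exact i₁.2)
    have hb'val : ∀ i : {x // x ∈ s},
        chi b' i.1 = (if i = i₀ then 1 else 0) + (if i = i₁ then (1:ℚ) else 0) := by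
      intro i
      have hmem : i.1 ∈ b' ↔ (i = i₀ ∨ i = i₁) := by
        constructor
        · intro h
          have : i.1 ∈ b' ∩ s := Finset.mem_inter.2 ⟨h, i.2⟩
          rw [hb's] at this
          rcases Finset.mem_insert.1 this with h' | h'
          · exact Or.inl (Subtype.ext h')
          · exact Or.inr (Subtype.ext (Finset.mem_singleton.1 h'))
        · rintro (rfl | rfl)
          · have : i.1 ∈ b' ∩ s := by rw [hb's]; exact Finset.mem_insert_self _ _
            exact (Finset.mem_inter.1 this).1
          · have : i.1 ∈ b' ∩ s := by
              rw [hb's]; exact Finset.mem_insert.2 (Or.inr (Finset.mem_singleton_self _))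
            exact (Finset.mem_inter.1 this).1
      unfold chi
      by_cases e0 : i = i₀
      · subst e0
        have e1 : i ≠ i₁ := hne
        simp [hmem, e1]
      · by_cases e1 : i = i₁
        · subst e1
          simp [hmem, e0]
        · simp [hmem, e0, e1]
    have hsum : ∑ i : {x // x ∈ s}, chi b' i.1 * chi (β i) j
        = chi (β i₀) j + chi (β i₁) j := by
      rw [Finset.sum_congr rfl (fun i _ => by rw [hb'val i, add_mul])]
      rw [Finset.sum_add_distrib]
      congr 1
      · rw [Finset.sum_eq_single i₀ (fun i _ hii => by simp [hii]) (by simp)]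
        simp
      · rw [Finset.sum_eq_single i₁ (fun i _ hii => by simp [hii]) (by simp)]
        simp
    have h2 : chi b' j = 2 := by
      rw [hrep (chi b') (hBW b' hb'B) j, hsum, h0, h1]; norm_num
    rcases chi_01 b' j with h | h <;> rw [h2] at h <;> norm_num at h
  -- conclusion
  intro b₁ hb₁ b₂ hb₂ a ha
  obtain ⟨b₃, hb₃B, hb₃s⟩ := hsurj (b₁ ∩ b₂ ∩ s) Finset.inter_subset_right
  suffices hEq : b₃ = b₁ ∩ b₂ by
    rw [← hEq]
    exact hcross a ha b₃ hb₃B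
  apply chi_injective
  funext j
  have h3 := hrep (chi b₃) (hBW b₃ hb₃B) j
  have h1 := hrep (chi b₁) (hBW b₁ hb₁) j
  have h2 := hrep (chi b₂) (hBW b₂ hb₂) j
  have hmul : ∀ i : {x // x ∈ s}, chi b₃ i.1 = chi b₁ i.1 * chi b₂ i.1 := by
    intro i
    have hmem : i.1 ∈ b₃ ↔ i.1 ∈ b₁ ∧ i.1 ∈ b₂ := by
      constructor
      · intro h
        have : i.1 ∈ b₃ ∩ s := Finset.mem_inter.2 ⟨h, i.2⟩
        rw [hb₃s] at this
        have := (Finset.mem_inter.1 this).1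
        exact Finset.mem_inter.1 this
      · rintro ⟨ha1, ha2⟩
        have : i.1 ∈ b₁ ∩ b₂ ∩ s :=
          Finset.mem_inter.2 ⟨Finset.mem_inter.2 ⟨ha1, ha2⟩, i.2⟩
        rw [← hb₃s] at this
        exact (Finset.mem_inter.1 this).1
    unfold chi
    by_cases e1 : i.1 ∈ b₁ <;> by_cases e2 : i.1 ∈ b₂ <;> simp [e1, e2, hmem]
  have hgprod : chi (b₁ ∩ b₂) j = chi b₁ j * chi b₂ j := by
    unfold chi
    by_cases e1 : j ∈ b₁ <;> by_cases e2 : j ∈ b₂ <;> simp [e1, e2]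
  rw [hgprod, h3, h1, h2, Finset.sum_congr rfl (fun i _ => by rw [hmul i])]
  by_cases hall : ∀ i : {x // x ∈ s}, chi (β i) j = 0
  · simp [hall]
  · push_neg at hall
    obtain ⟨i₀, hi₀⟩ := hall
    have hL0 : chi (β i₀) j = 1 := (chi_01 _ _).resolve_left hi₀
    have huniq : ∀ i : {x // x ∈ s}, i ≠ i₀ → chi (β i) j = 0 := by
      intro i hii
      by_contra hne
      exact lambda_unique j i i₀ hii ((chi_01 _ _).resolve_left hne) hL0
    rw [Finset.sum_eq_single i₀ (fun i _ hii => by rw [huniq i hii]; ring) (by simp),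
      Finset.sum_eq_single i₀ (fun i _ hii => by rw [huniq i hii]; ring) (by simp),
      Finset.sum_eq_single i₀ (fun i _ hii => by rw [huniq i hii]; ring) (by simp)]
    rw [hL0]
    ring
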